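/- Let δ ∈ (0,1), let c ≥ 1 be a constant, let 2 ≤ P ≤ d, and let v₁, …, v_m be i.i.d. uniform on S^{d−1}. If m ≥ 400 c P^{8c²} √(log P) log(max(P, 1/δ)), then with probability at least 1 − δ: for every p ∈ [P] there exists i ∈ [m] such that |v_{i,p}| / max_{q∈[P]\{p}} |v_{i,q}| ≥ (1+2c)/(1+c). -/

import Mathlib

open MeasureTheory ProbabilityTheory

open Real Set
open scoped NNReal ENNReal

noncomputable section

/-- The standard Gaussian measure `N(0, I_d)` on `ℝ^d` (as Euclidean space). -/
def stdGaussian (d : ℕ) : Measure (EuclideanSpace ℝ (Fin d)) :=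
  (Measure.pi fun _ : Fin d => gaussianReal 0 1).map
    (MeasurableEquiv.toLp 2 (Fin d → ℝ))

instance (d : ℕ) : IsProbabilityMeasure (stdGaussian d) :=
  Measure.isProbabilityMeasure_map (MeasurableEquiv.measurable _).aemeasurable

/-- The uniform distribution on the unit sphere `S^{d−1}`, realized as the law of
`Z/‖Z‖` for `Z ∼ N(0, I_d)`. -/
def unifSphere (d : ℕ) : Measure (EuclideanSpace ℝ (Fin d)) :=
  (stdGaussian d).map fun x => ‖x‖⁻¹ • x

instance (d : ℕ) : IsProbabilityMeasure (unifSphere d) := by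
  refine Measure.isProbabilityMeasure_map (Measurable.aemeasurable ?_)
  exact (continuous_smul.measurable).comp ((measurable_norm.inv).prodMk measurable_id)

lemma pdf_eq (x : ℝ) : gaussianPDFReal 0 1 x = (Real.sqrt (2*π))⁻¹ * Real.exp (-x^2/2) := by
  unfold gaussianPDFReal
  norm_num

lemma sqrt2pi : (2:ℝ) ≤ Real.sqrt (2*π) := by
  exact Real.le_sqrt_of_sq_le (by nlinarith [Real.pi_gt_three])

lemma gauss_upper_one_sided (s : ℝ) (hs : 1 ≤ s) :
    gaussianReal 0 1 (Set.Ici s) ≤ ENNReal.ofReal (Real.exp (-s^2/2) / 2) := by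
  rw [gaussianReal_apply_eq_integral _ (one_ne_zero) _]
  apply ENNReal.ofReal_le_ofReal
  have hint : IntegrableOn (fun x => ((Real.sqrt (2*π))⁻¹ * Real.exp (-s^2/2) * Real.exp s) * Real.exp (-x)) (Set.Ici s) := by
    apply Integrable.const_mul
    have := exp_neg_integrableOn_Ioi s (one_pos)
    simp only [neg_one_mul] at this
    rwa [← integrableOn_Ici_iff_integrableOn_Ioi] at this
  calc ∫ x in Set.Ici s, gaussianPDFReal 0 1 x
      ≤ ∫ x in Set.Ici s, ((Real.sqrt (2*π))⁻¹ * Real.exp (-s^2/2) * Real.exp s) * Real.exp (-x) := by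
        apply setIntegral_mono_on
        · exact (integrable_gaussianPDFReal 0 1).integrableOn
        · exact hint
        · exact measurableSet_Ici
        · intro x hx
          rw [pdf_eq]
          rw [mul_assoc, mul_assoc, ← Real.exp_add, ← Real.exp_add]
          have hx' : s ≤ x := hx
          have h1 : -x^2/2 ≤ -s^2/2 + (s + -x) := by nlinarith
          exact mul_le_mul_of_nonneg_left (Real.exp_le_exp.mpr h1) (by positivity)
    _ = ((Real.sqrt (2*π))⁻¹ * Real.exp (-s^2/2) * Real.exp s) * ∫ x in Set.Ici s, Real.exp (-x) := by
        rw [integral_const_mul]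
    _ ≤ Real.exp (-s^2/2) / 2 := by
        rw [setIntegral_congr_set Ioi_ae_eq_Ici.symm, integral_exp_neg_Ioi]
        have h2 : (Real.sqrt (2*π))⁻¹ ≤ 1/2 := by
          rw [inv_le_comm₀ (by positivity) (by norm_num)]
          simpa using sqrt2pi
        rw [mul_comm ((Real.sqrt (2*π))⁻¹) _, mul_assoc, mul_assoc, ← Real.exp_add]
        simp only [add_neg_cancel, Real.exp_zero]
        nlinarith [Real.exp_pos (-s^2/2)]

lemma gauss_symm (t : ℝ) : gaussianReal 0 1 (Set.Iic (-t)) = gaussianReal 0 1 (Set.Ici t) := by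
  have h := gaussianReal_map_const_mul (μ := 0) (v := 1) (-1)
  have h1 : (⟨(-1:ℝ)^2, sq_nonneg _⟩ : ℝ≥0) * 1 = 1 := by
    ext; norm_num
  replace h : Measure.map (fun x : ℝ => -1 * x) (gaussianReal 0 1) = gaussianReal 0 1 := by
    rw [h]
    congr 1
    · norm_num
  conv_lhs => rw [← h]
  rw [Measure.map_apply (by fun_prop) measurableSet_Iic]
  congr 1
  ext x
  simp only [Set.mem_preimage, Set.mem_Iic, Set.mem_Ici]
  constructor <;> intro hx <;> nlinarith

lemma gauss_upper (t : ℝ) (ht : 1 ≤ t) :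
    gaussianReal 0 1 {x | ¬ (0 < |x| ∧ |x| ≤ t)} ≤ ENNReal.ofReal (Real.exp (-t^2/2)) := by
  have hsub : {x : ℝ | ¬ (0 < |x| ∧ |x| ≤ t)} ⊆ {0} ∪ (Set.Ici t ∪ Set.Iic (-t)) := by
    intro x hx
    simp only [Set.mem_setOf_eq, not_and, not_le] at hx
    rcases eq_or_ne x 0 with h0 | h0
    · exact Or.inl (by simp [h0])
    · have : t < |x| := hx (abs_pos.mpr h0)
      rcases abs_cases x with ⟨he, _⟩ | ⟨he, _⟩
      · exact Or.inr (Or.inl (le_of_lt (show t < x by linarith [he, this])))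
      · exact Or.inr (Or.inr (by simp only [Set.mem_Iic]; linarith [he ▸ this]))
  calc gaussianReal 0 1 {x | ¬ (0 < |x| ∧ |x| ≤ t)}
      ≤ gaussianReal 0 1 ({0} ∪ (Set.Ici t ∪ Set.Iic (-t))) := measure_mono hsub
    _ ≤ gaussianReal 0 1 {0} + (gaussianReal 0 1 (Set.Ici t) + gaussianReal 0 1 (Set.Iic (-t))) :=
        le_trans (measure_union_le _ _) (by gcongr; exact measure_union_le _ _)
    _ ≤ 0 + (ENNReal.ofReal (Real.exp (-t^2/2) / 2) + ENNReal.ofReal (Real.exp (-t^2/2) / 2)) := by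
        gcongr
        · exact le_of_eq ((gaussianReal_absolutelyContinuous 0 one_ne_zero) (volume_singleton))
        · exact gauss_upper_one_sided t ht
        · rw [gauss_symm]; exact gauss_upper_one_sided t ht
    _ = ENNReal.ofReal (Real.exp (-t^2/2)) := by
        rw [zero_add, ← ENNReal.ofReal_add (by positivity) (by positivity)]
        norm_num

lemma gauss_lower (s : ℝ) (hs : 0 ≤ s) :
    ENNReal.ofReal ((Real.sqrt (2*π))⁻¹ * Real.exp (-(s+1)^2/2)) ≤ gaussianReal 0 1 {x | s ≤ |x|} := by
  have h1 : Set.Icc s (s+1) ⊆ {x | s ≤ |x|} := fun x hx => le_trans hx.1 (le_abs_self x)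
  refine le_trans ?_ (measure_mono h1)
  rw [gaussianReal_apply_eq_integral _ (one_ne_zero) _]
  apply ENNReal.ofReal_le_ofReal
  have hconst : ∀ x ∈ Set.Icc s (s+1), (Real.sqrt (2*π))⁻¹ * Real.exp (-(s+1)^2/2) ≤ gaussianPDFReal 0 1 x := by
    intro x hx
    rw [pdf_eq]
    have : Real.exp (-(s+1)^2/2) ≤ Real.exp (-x^2/2) := by
      apply Real.exp_le_exp.mpr
      nlinarith [hx.1, hx.2]
    have h0 : (0:ℝ) ≤ (Real.sqrt (2*π))⁻¹ := by positivity
    nlinarith [this]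
  calc (Real.sqrt (2*π))⁻¹ * Real.exp (-(s+1)^2/2)
      = ∫ _ in Set.Icc s (s+1), ((Real.sqrt (2*π))⁻¹ * Real.exp (-(s+1)^2/2)) := by
        rw [setIntegral_const]
        simp [Real.volume_Icc]
    _ ≤ ∫ x in Set.Icc s (s+1), gaussianPDFReal 0 1 x := by
        apply setIntegral_mono_on
        · exact integrableOn_const (by rw [Real.volume_Icc]; exact ENNReal.ofReal_ne_top)
        · exact (integrable_gaussianPDFReal 0 1).integrableOn
        · exact measurableSet_Icc
        · exact hconst

lemma coord_le_norm {d : ℕ} (x : EuclideanSpace ℝ (Fin d)) (j : Fin d) : |x j| ≤ ‖x‖ := by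
  rw [EuclideanSpace.norm_eq x, show |x j| = Real.sqrt (‖x j‖^2) by
    rw [Real.sqrt_sq_eq_abs, Real.norm_eq_abs, abs_abs]]
  exact Real.sqrt_le_sqrt
    (Finset.single_le_sum (f := fun i => ‖x i‖^2) (fun i _ => sq_nonneg _) (Finset.mem_univ j))

lemma measurable_ratio {d P : ℕ} (hPd : P ≤ d) (p : Fin P) :
    Measurable (fun v : EuclideanSpace ℝ (Fin d) =>
      |v (Fin.castLE hPd p)| / ⨆ q : {q : Fin P // q ≠ p}, |v (Fin.castLE hPd (q : Fin P))|) := by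
  apply Measurable.div
  · exact ((measurable_pi_apply _).comp (WithLp.measurable_ofLp 2 _)).abs
  · exact Measurable.iSup (fun q => ((measurable_pi_apply _).comp (WithLp.measurable_ofLp 2 _)).abs)

lemma good_set_lb {d P : ℕ} (hP : 2 ≤ P) (hPd : P ≤ d) (p : Fin P) (r t : ℝ)
    (hr : 0 ≤ r) (ht : 1 ≤ t) :
    ENNReal.ofReal ((Real.sqrt (2*π))⁻¹ * Real.exp (-(r*t+1)^2/2)
        * (1 - Real.exp (-t^2/2))^(P-1))
      ≤ unifSphere d {v | r ≤ |v (Fin.castLE hPd p)|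
          / ⨆ q : {q : Fin P // q ≠ p}, |v (Fin.castLE hPd (q : Fin P))|} := by
  classical
  set p' : Fin d := Fin.castLE hPd p with hp'
  set G : Set (EuclideanSpace ℝ (Fin d)) := {v | r ≤ |v p'|
      / ⨆ q : {q : Fin P // q ≠ p}, |v (Fin.castLE hPd (q : Fin P))|} with hG
  have hGmeas : MeasurableSet G := measurableSet_le measurable_const (measurable_ratio hPd p)
  have hfmeas : Measurable (fun x : EuclideanSpace ℝ (Fin d) => ‖x‖⁻¹ • x) :=
    (continuous_smul.measurable).comp ((measurable_norm.inv).prodMk measurable_id)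
  -- rectangle sets
  set A : Set ℝ := {x | r*t ≤ |x|} with hA
  set T : Set ℝ := {x | 0 < |x| ∧ |x| ≤ t} with hT
  set C : Fin d → Set ℝ := fun j => if (j:ℕ) < P then (if j = p' then A else T) else Set.univ
    with hC
  have hCmeas : ∀ j, MeasurableSet (C j) := by
    intro j
    rw [hC]
    dsimp only
    split_ifs
    · exact measurableSet_le measurable_const measurable_abs
    · exact (measurableSet_lt measurable_const measurable_abs).inter
        (measurableSet_le measurable_abs measurable_const)
    · exact MeasurableSet.univ
  -- inclusion
  have hincl : Set.pi Set.univ C ⊆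
      (MeasurableEquiv.toLp 2 (Fin d → ℝ)) ⁻¹' ((fun x => ‖x‖⁻¹ • x) ⁻¹' G) := by
    intro x hx
    simp only [Set.mem_preimage]
    set w : EuclideanSpace ℝ (Fin d) := (MeasurableEquiv.toLp 2 (Fin d → ℝ)) x with hw
    have hwcoord : ∀ j, w j = x j := fun j => rfl
    -- get q0 ≠ p
    have : Nontrivial (Fin P) := Fin.nontrivial_iff_two_le.mpr hP
    obtain ⟨q0, hq0⟩ := exists_ne p
    have hxq0 : x (Fin.castLE hPd q0) ∈ T := by
      have := hx (Fin.castLE hPd q0) (Set.mem_univ _)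
      rw [hC] at this
      dsimp only at this
      rw [if_pos (by simpa using q0.isLt), if_neg (by
        simp only [hp']
        intro h
        exact hq0 (Fin.castLE_injective hPd h))] at this
      exact this
    have hxp : x p' ∈ A := by
      have := hx p' (Set.mem_univ _)
      rw [hC] at this
      dsimp only at this
      rwa [if_pos (by simp [hp', p.isLt]), if_pos rfl] at this
    have hxT : ∀ q : Fin P, q ≠ p → x (Fin.castLE hPd q) ∈ T := by
      intro q hq
      have := hx (Fin.castLE hPd q) (Set.mem_univ _)
      rw [hC] at this
      dsimp only at this
      rwa [if_pos (by simpa using q.isLt), if_neg (by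
        simp only [hp']
        intro h
        exact hq (Fin.castLE_injective hPd h))] at this
    have hwpos : 0 < ‖w‖ := by
      have h1 : 0 < |x (Fin.castLE hPd q0)| := hxq0.1
      have h2 : |w (Fin.castLE hPd q0)| ≤ ‖w‖ := coord_le_norm w _
      rw [hwcoord] at h2
      linarith
    have hinv : 0 < ‖w‖⁻¹ := inv_pos.mpr hwpos
    set y : EuclideanSpace ℝ (Fin d) := ‖w‖⁻¹ • w with hy
    have hycoord : ∀ j, y j = ‖w‖⁻¹ * x j := by
      intro j
      rw [hy, PiLp.smul_apply, smul_eq_mul, hwcoord]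
    have hyabs : ∀ j, |y j| = ‖w‖⁻¹ * |x j| := by
      intro j
      rw [hycoord, abs_mul, abs_of_pos hinv]
    simp only [hG, Set.mem_setOf_eq]
    set s : ℝ := ⨆ q : {q : Fin P // q ≠ p}, |y (Fin.castLE hPd (q : Fin P))| with hs
    have hne : Nonempty {q : Fin P // q ≠ p} := ⟨⟨q0, hq0⟩⟩
    have hsle : s ≤ ‖w‖⁻¹ * t := by
      apply ciSup_le
      intro q
      rw [hyabs]
      exact mul_le_mul_of_nonneg_left (hxT q q.2).2 hinv.le
    have hspos : 0 < s := by
      have hle : |y (Fin.castLE hPd q0)| ≤ s :=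
        le_ciSup (f := fun q : {q : Fin P // q ≠ p} => |y (Fin.castLE hPd (q : Fin P))|)
          (Finite.bddAbove_range _) ⟨q0, hq0⟩
      rw [hyabs] at hle
      have : 0 < ‖w‖⁻¹ * |x (Fin.castLE hPd q0)| := mul_pos hinv hxq0.1
      linarith
    rw [le_div_iff₀ hspos]
    calc r * s ≤ r * (‖w‖⁻¹ * t) := mul_le_mul_of_nonneg_left hsle hr
      _ = ‖w‖⁻¹ * (r * t) := by ring
      _ ≤ ‖w‖⁻¹ * |x p'| := mul_le_mul_of_nonneg_left hxp hinv.le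
      _ = |y p'| := (hyabs p').symm
  -- measure chain
  have h1 : unifSphere d G = stdGaussian d ((fun x => ‖x‖⁻¹ • x) ⁻¹' G) := by
    rw [unifSphere, Measure.map_apply hfmeas hGmeas]
  have h2 : stdGaussian d ((fun x => ‖x‖⁻¹ • x) ⁻¹' G)
      = (Measure.pi fun _ : Fin d => gaussianReal 0 1)
        ((MeasurableEquiv.toLp 2 (Fin d → ℝ)) ⁻¹' ((fun x => ‖x‖⁻¹ • x) ⁻¹' G)) := by
    rw [_root_.stdGaussian, Measure.map_apply (MeasurableEquiv.measurable _) (hfmeas hGmeas)]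
  rw [h1, h2]
  refine le_trans ?_ (measure_mono hincl)
  rw [Measure.pi_pi]
  -- product computation
  set S1 : Finset (Fin d) := Finset.univ.filter (fun j : Fin d => (j:ℕ) < P) with hS1
  have hp'S1 : p' ∈ S1 := Finset.mem_filter.mpr ⟨Finset.mem_univ _, by simp [hp', p.isLt]⟩
  have hprodeq : (∏ j, gaussianReal 0 1 (C j))
      = ∏ j ∈ S1, gaussianReal 0 1 (if j = p' then A else T) := by
    rw [hS1, Finset.prod_filter]
    apply Finset.prod_congr rfl
    intro j _
    by_cases hj : (j:ℕ) < P
    · rw [if_pos hj, hC]; dsimp only; rw [if_pos hj]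
    · rw [if_neg hj, hC]; dsimp only; rw [if_neg hj, measure_univ]
  rw [hprodeq, ← Finset.mul_prod_erase S1 _ hp'S1, if_pos rfl]
  have herase : ∏ j ∈ S1.erase p', gaussianReal 0 1 (if j = p' then A else T)
      = gaussianReal 0 1 T ^ (S1.erase p').card := by
    rw [Finset.prod_congr rfl (fun j hj => by rw [if_neg (Finset.ne_of_mem_erase hj)]),
      Finset.prod_const]
  rw [herase]
  -- now bound the two factors
  have hTmeas : MeasurableSet T := (measurableSet_lt measurable_const measurable_abs).inter
        (measurableSet_le measurable_abs measurable_const)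
  have he1 : Real.exp (-t^2/2) ≤ 1 := by
    rw [show (1:ℝ) = Real.exp 0 by rw [Real.exp_zero]]
    apply Real.exp_le_exp.mpr
    nlinarith
  have hTlb : ENNReal.ofReal (1 - Real.exp (-t^2/2)) ≤ gaussianReal 0 1 T := by
    have hcompl : gaussianReal 0 1 Tᶜ ≤ ENNReal.ofReal (Real.exp (-t^2/2)) := by
      have : Tᶜ = {x : ℝ | ¬ (0 < |x| ∧ |x| ≤ t)} := by rw [hT, Set.compl_setOf]
      rw [this]
      exact gauss_upper t ht
    have hadd : gaussianReal 0 1 T + gaussianReal 0 1 Tᶜ = 1 := by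
      rw [measure_add_measure_compl hTmeas, measure_univ]
    have hTeq : gaussianReal 0 1 T = 1 - gaussianReal 0 1 Tᶜ :=
      ENNReal.eq_sub_of_add_eq (measure_ne_top _ _) hadd
    rw [hTeq, ENNReal.ofReal_sub _ (Real.exp_nonneg _), ENNReal.ofReal_one]
    exact tsub_le_tsub_left hcompl 1
  have hk : (S1.erase p').card ≤ P - 1 := by
    rw [Finset.card_erase_of_mem hp'S1]
    have hcard : S1.card ≤ P := by
      have h2 : S1.card ≤ (Finset.range P).card := by
        apply Finset.card_le_card_of_injOn (fun j : Fin d => (j : ℕ))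
        · intro j hj
          simp only [hS1, Finset.mem_coe, Finset.mem_filter, Finset.mem_univ, true_and] at hj
          exact Finset.mem_coe.mpr (Finset.mem_range.mpr hj)
        · exact Fin.val_injective.injOn
      simpa using h2
    omega
  rw [ENNReal.ofReal_mul (by positivity)]
  apply mul_le_mul'
  · exact le_trans (le_of_eq (by ring_nf)) (gauss_lower (r*t) (by positivity))
  · calc ENNReal.ofReal ((1 - Real.exp (-t^2/2))^(P-1))
        ≤ ENNReal.ofReal ((1 - Real.exp (-t^2/2))^(S1.erase p').card) :=
          ENNReal.ofReal_le_ofReal (pow_le_pow_of_le_one (by linarith) (by nlinarith [Real.exp_pos (-t^2/2)]) hk)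
      _ = (ENNReal.ofReal (1 - Real.exp (-t^2/2)))^(S1.erase p').card :=
          (ENNReal.ofReal_pow (by linarith) _)
      _ ≤ gaussianReal 0 1 T ^ (S1.erase p').card := pow_le_pow_left' hTlb _

lemma aux_7r (c : ℝ) (hc : 1 ≤ c) : 7*((1+2*c)/(1+c))^2 ≤ 16*c^2 := by
  have hc1 : (0:ℝ) < 1 + c := by linarith
  rw [div_pow, ← mul_div_assoc, div_le_iff₀ (by positivity)]
  nlinarith [sq_nonneg (c-1), sq_nonneg (c*(c-1)), sq_nonneg (c+1), sq_nonneg c]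

lemma aux_sigma_pos (c r : ℝ) (hc : 1 ≤ c) (h7r : 7*r^2 ≤ 16*c^2) : 0 < 8*c^2 - 2*r^2 := by
  nlinarith [sq_nonneg c]

lemma aux_amgm (r su σ : ℝ) (hr0 : 0 ≤ r) (hsu0 : 0 ≤ su) (hσpos : 0 < σ)
    (h2 : r^2 ≤ (2/3)*σ) : 2*r*su ≤ σ*su^2 + 2/3 := by
  have h1 : 2*r*su * σ ≤ (σ*su^2 + 2/3)*σ := by
    nlinarith [sq_nonneg (σ*su - r)]
  exact le_of_mul_le_mul_right h1 hσpos

set_option maxHeartbeats 1000000 in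
lemma key_real (δ c : ℝ) (hδ0 : 0 < δ) (hδ1 : δ < 1) (hc : 1 ≤ c) (P m : ℕ) (hP : 2 ≤ P)
    (hm : 400 * c * (P : ℝ) ^ (8 * c ^ 2) * Real.sqrt (Real.log P)
        * Real.log (max (P : ℝ) (1 / δ)) ≤ m) :
    (P:ℝ) * (1 - (Real.sqrt (2*π))⁻¹
        * Real.exp (-((1+2*c)/(1+c) * (2*Real.sqrt (Real.log P))+1)^2/2)
        * (1 - Real.exp (-(2*Real.sqrt (Real.log P))^2/2))^(P-1))^m ≤ δ := by
  have hP2 : (2:ℝ) ≤ (P:ℝ) := by exact_mod_cast hP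
  have hPpos : (0:ℝ) < P := by linarith
  set u := Real.log P with hu
  have hu2 : Real.log 2 ≤ u := Real.log_le_log (by norm_num) hP2
  have hlog2 : (0.6931471803:ℝ) < Real.log 2 := Real.log_two_gt_d9
  have hupos : 0 < u := by linarith
  have hsu : (0.8:ℝ) ≤ Real.sqrt u := Real.le_sqrt_of_sq_le
    (by rw [show (0.8:ℝ)^2 = 0.64 by norm_num]; linarith)
  have hsu0 : 0 ≤ Real.sqrt u := Real.sqrt_nonneg u
  have hsq : Real.sqrt u ^ 2 = u := Real.sq_sqrt hupos.le
  set t := 2 * Real.sqrt u with htdef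
  have ht1 : 1 ≤ t := by rw [htdef]; linarith
  have hts : t^2 = 4*u := by rw [htdef, mul_pow, hsq]; ring
  set r := (1+2*c)/(1+c) with hrdef
  have hc1 : (0:ℝ) < 1 + c := by linarith
  have hrc : r * (1+c) = 1 + 2*c := div_mul_cancel₀ _ (ne_of_gt hc1)
  have hr1 : 1 ≤ r := by rw [hrdef, le_div_iff₀ hc1]; linarith
  have hr0 : 0 ≤ r := by linarith
  have hexp_t : Real.exp (-t^2/2) = ((P:ℝ)^2)⁻¹ := by
    rw [hts, show -(4*u)/2 = -(u+u) by ring, Real.exp_neg, Real.exp_add, hu,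
      Real.exp_log hPpos]
    norm_num [sq]
  have hPinv1 : ((P:ℝ)^2)⁻¹ ≤ 1/4 := by
    rw [inv_le_comm₀ (by positivity) (by norm_num)]
    nlinarith [sq_nonneg ((P:ℝ)-2), hP2]
  have hPinv0 : 0 < ((P:ℝ)^2)⁻¹ := by positivity
  set h := (1 - Real.exp (-t^2/2))^(P-1) with hhdef
  have hh2 : 1/2 ≤ h := by
    rw [hhdef, hexp_t]
    have hB := one_add_mul_le_pow (a := -((P:ℝ)^2)⁻¹) (by linarith) (P-1)
    have hcast : ((P-1 : ℕ) : ℝ) = (P:ℝ) - 1 := by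
      rw [Nat.cast_sub (by omega)]; norm_num
    rw [hcast] at hB
    have hlhs : 1/2 ≤ 1 + ((P:ℝ) - 1) * -((P:ℝ)^2)⁻¹ := by
      have h9 : ((P:ℝ) - 1) * ((P:ℝ)^2)⁻¹ ≤ 1/2 := by
        rw [mul_inv_le_iff₀ (by positivity)]
        nlinarith [sq_nonneg ((P:ℝ)-1)]
      linarith
    calc (1:ℝ)/2 ≤ 1 + ((P:ℝ) - 1) * -((P:ℝ)^2)⁻¹ := hlhs
      _ ≤ (1 + -((P:ℝ)^2)⁻¹)^(P-1) := hB
      _ = (1 - ((P:ℝ)^2)⁻¹)^(P-1) := by ring_nf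
  have hh1 : h ≤ 1 := by
    rw [hhdef]
    apply pow_le_one₀
    · rw [hexp_t]; linarith
    · linarith [Real.exp_pos (-t^2/2)]
  have hsqrt2pi : (2:ℝ) ≤ Real.sqrt (2*π) :=
    Real.le_sqrt_of_sq_le (by nlinarith [Real.pi_gt_three])
  have hsqrt2pi3 : Real.sqrt (2*π) ≤ 3 := by
    rw [show (3:ℝ) = Real.sqrt 9 by
      rw [show (9:ℝ) = 3^2 by norm_num, Real.sqrt_sq (by norm_num : (0:ℝ) ≤ 3)]]
    exact Real.sqrt_le_sqrt (by nlinarith [Real.pi_lt_d2])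
  have hsqrt2pipos : (0:ℝ) < Real.sqrt (2*π) := by linarith
  set g := (Real.sqrt (2*π))⁻¹ * Real.exp (-(r*t+1)^2/2) with hgdef
  have hg0 : 0 ≤ g := by positivity
  have hg1 : g ≤ 1/2 := by
    rw [hgdef]
    have h1 : (Real.sqrt (2*π))⁻¹ ≤ 1/2 := by
      rw [inv_le_comm₀ hsqrt2pipos (by norm_num)]
      linarith
    have h2 : Real.exp (-(r*t+1)^2/2) ≤ 1 := by
      rw [show (1:ℝ) = Real.exp 0 by rw [Real.exp_zero]]
      apply Real.exp_le_exp.mpr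
      nlinarith [sq_nonneg (r*t+1)]
    calc (Real.sqrt (2*π))⁻¹ * Real.exp (-(r*t+1)^2/2) ≤ (1/2) * 1 :=
          mul_le_mul h1 h2 (Real.exp_pos _).le (by norm_num)
      _ = 1/2 := by norm_num
  set ρ := g * h with hρdef
  have hρ0 : 0 ≤ ρ := mul_nonneg hg0 (by linarith)
  have hρ1 : ρ ≤ 1 := by
    have : ρ ≤ (1/2) * 1 := mul_le_mul hg1 hh1 (by linarith) (by norm_num)
    linarith
  have h7r : 7*r^2 ≤ 16*c^2 := by rw [hrdef]; exact aux_7r c hc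
  set σ := 8*c^2 - 2*r^2 with hσdef
  have hσpos : 0 < σ := aux_sigma_pos c r hc h7r
  have hAMGM : 2*r*Real.sqrt u ≤ σ*u + 2/3 := by
    have h2 : r^2 ≤ (2/3)*σ := by rw [hσdef]; linarith
    have h3 := aux_amgm r (Real.sqrt u) σ hr0 hsu0 hσpos h2
    rw [hsq] at h3
    exact h3
  have hK : (P:ℝ)^(8*c^2) = Real.exp (8*c^2*u) := by
    rw [hu, Real.rpow_def_of_pos hPpos, mul_comm (Real.log (P:ℝ)) (8*c^2)]
  have hKpos : (0:ℝ) < (P:ℝ)^(8*c^2) := by rw [hK]; exact Real.exp_pos _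
  have hexpand : (r*t+1)^2/2 = 2*r^2*u + 2*r*Real.sqrt u + 1/2 := by
    rw [htdef]
    linear_combination (2*r^2) * hsq
  have hexp8 : (1:ℝ)/8 ≤ Real.exp (8*c^2*u - (r*t+1)^2/2) := by
    have hmono : Real.exp (-(2:ℝ)) ≤ Real.exp (8*c^2*u - (r*t+1)^2/2) := by
      apply Real.exp_le_exp.mpr
      rw [hexpand]
      have e : σ*u = 8*c^2*u - 2*r^2*u := by rw [hσdef]; ring
      linarith only [hAMGM, e]
    have hexp2 : Real.exp (2:ℝ) ≤ 8 := by
      rw [show (2:ℝ) = 1+1 by norm_num, Real.exp_add]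
      have he := Real.exp_one_lt_d9
      calc Real.exp 1 * Real.exp 1 ≤ 2.7182818286 * 2.7182818286 :=
            mul_le_mul he.le he.le (Real.exp_pos 1).le (by norm_num)
        _ ≤ 8 := by norm_num
    have : (1:ℝ)/8 ≤ Real.exp (-(2:ℝ)) := by
      rw [Real.exp_neg, le_inv_comm₀ (by norm_num) (Real.exp_pos 2)]
      linarith
    linarith
  have hgKlb : 1/24 ≤ g * (P:ℝ)^(8*c^2) := by
    rw [hgdef, hK, mul_assoc, ← Real.exp_add]
    have h1 : (1:ℝ)/3 ≤ (Real.sqrt (2*π))⁻¹ := by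
      rw [le_inv_comm₀ (by norm_num) hsqrt2pipos]
      linarith
    have h2 : (1:ℝ)/8 ≤ Real.exp (-(r*t+1)^2/2 + 8*c^2*u) := by
      rw [show -(r*t+1)^2/2 + 8*c^2*u = 8*c^2*u - (r*t+1)^2/2 by ring]
      exact hexp8
    calc (1:ℝ)/24 = (1/3)*(1/8) := by norm_num
      _ ≤ (Real.sqrt (2*π))⁻¹ * Real.exp (-(r*t+1)^2/2 + 8*c^2*u) :=
          mul_le_mul h1 h2 (by norm_num) (by positivity)
  have hgK : 1 ≤ g * (P:ℝ)^(8*c^2) * (100*c*Real.sqrt u) := by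
    have h80 : (80:ℝ) ≤ 100*c*Real.sqrt u := by
      have h81 : (1:ℝ)*0.8 ≤ c*Real.sqrt u := mul_le_mul hc hsu (by norm_num) (by linarith)
      calc (80:ℝ) = 100*((1:ℝ)*0.8) := by norm_num
        _ ≤ 100*(c*Real.sqrt u) := by linarith
        _ = 100*c*Real.sqrt u := by ring
    have := mul_le_mul hgKlb h80 (by norm_num) (le_trans (by norm_num) hgKlb)
    linarith only [this]
  set L := Real.log (max (P:ℝ) (1/δ)) with hL
  have hLu : u ≤ L := Real.log_le_log hPpos (le_max_left _ _)
  have hLδ : Real.log (1/δ) ≤ L := Real.log_le_log (by positivity) (le_max_right _ _)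
  have hL0 : 0 < L := lt_of_lt_of_le hupos hLu
  have hρc : 2 ≤ ρ * (400*c*(P:ℝ)^(8*c^2)*Real.sqrt u) := by
    have e3 : ρ*(400*c*(P:ℝ)^(8*c^2)*Real.sqrt u)
        = (g*(P:ℝ)^(8*c^2)*(100*c*Real.sqrt u))*(4*h) := by rw [hρdef]; ring
    rw [e3]
    have h4h : 2 ≤ 4*h := by linarith
    calc (2:ℝ) = 1*2 := by norm_num
      _ ≤ (g*(P:ℝ)^(8*c^2)*(100*c*Real.sqrt u))*(4*h) :=
          mul_le_mul hgK h4h (by norm_num) (le_trans zero_le_one hgK)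
  have h119 : u + Real.log (1/δ) ≤ ρ * m := by
    have hmm : ρ*(400*c*(P:ℝ)^(8*c^2)*Real.sqrt u*L) ≤ ρ*m := mul_le_mul_of_nonneg_left hm hρ0
    have h2L : 2*L ≤ ρ*(400*c*(P:ℝ)^(8*c^2)*Real.sqrt u*L) := by
      have h5 := mul_le_mul_of_nonneg_right hρc hL0.le
      calc 2*L ≤ ρ*(400*c*(P:ℝ)^(8*c^2)*Real.sqrt u)*L := h5
        _ = ρ*(400*c*(P:ℝ)^(8*c^2)*Real.sqrt u*L) := by ring
    linarith only [hmm, h2L, hLu, hLδ]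
  have hpow : ((1:ℝ) - ρ)^m ≤ Real.exp (-ρ*(m:ℝ)) := by
    have h1 : (1:ℝ) - ρ ≤ Real.exp (-ρ) := by linarith [Real.add_one_le_exp (-ρ)]
    calc ((1:ℝ)-ρ)^m ≤ (Real.exp (-ρ))^m := pow_le_pow_left₀ (by linarith) h1 m
      _ = Real.exp (-ρ*(m:ℝ)) := by rw [← Real.exp_nat_mul]; ring_nf
  calc (P:ℝ)*(1-ρ)^m ≤ (P:ℝ)*Real.exp (-ρ*(m:ℝ)) := mul_le_mul_of_nonneg_left hpow hPpos.le
    _ = Real.exp (u - ρ*(m:ℝ)) := by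
        rw [show u - ρ*(m:ℝ) = u + (-ρ*(m:ℝ)) by ring, Real.exp_add, hu, Real.exp_log hPpos]
    _ ≤ δ := by
        rw [show δ = Real.exp (Real.log δ) from (Real.exp_log hδ0).symm]
        apply Real.exp_le_exp.mpr
        have hlog : Real.log (1/δ) = -Real.log δ := by rw [one_div, Real.log_inv]
        rw [hlog] at h119
        linarith only [h119]

theorem existence_of_good_neurons (δ : ℝ) (hδ : δ ∈ Set.Ioo (0 : ℝ) 1)
    (c : ℝ) (hc : 1 ≤ c) (P d m : ℕ) (hP : 2 ≤ P) (hPd : P ≤ d)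
    (hm : 400 * c * (P : ℝ) ^ (8 * c ^ 2) * Real.sqrt (Real.log P)
        * Real.log (max (P : ℝ) (1 / δ)) ≤ m) :
    ENNReal.ofReal (1 - δ)
      ≤ (Measure.pi fun _ : Fin m => unifSphere d)
          {V | ∀ p : Fin P, ∃ i : Fin m,
            (1 + 2 * c) / (1 + c)
              ≤ |V i (Fin.castLE hPd p)|
                / (⨆ q : {q : Fin P // q ≠ p}, |V i (Fin.castLE hPd (q : Fin P))|)} := by
  classical
  obtain ⟨hδ0, hδ1⟩ := hδ
  have hP2 : (2:ℝ) ≤ (P:ℝ) := by exact_mod_cast hP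
  have hPpos : (0:ℝ) < P := by linarith
  have hu2 : Real.log 2 ≤ Real.log P := Real.log_le_log (by norm_num) hP2
  have hlog2 : (0.6931471803:ℝ) < Real.log 2 := Real.log_two_gt_d9
  have hupos : (0:ℝ) < Real.log P := by linarith
  have hsu : (0.8:ℝ) ≤ Real.sqrt (Real.log P) := Real.le_sqrt_of_sq_le
    (by rw [show (0.8:ℝ)^2 = 0.64 by norm_num]; linarith)
  set r : ℝ := (1 + 2*c)/(1 + c) with hrdef
  have hc1 : (0:ℝ) < 1 + c := by linarith
  have hr0 : 0 ≤ r := by positivity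
  set t : ℝ := 2*Real.sqrt (Real.log P) with htdef
  have ht1 : 1 ≤ t := by rw [htdef]; linarith
  set ρ : ℝ := (Real.sqrt (2*π))⁻¹ * Real.exp (-(r*t+1)^2/2)
      * (1 - Real.exp (-t^2/2))^(P-1) with hρdef
  have hexp_le_one : Real.exp (-t^2/2) ≤ 1 := by
    rw [show (1:ℝ) = Real.exp 0 by rw [Real.exp_zero]]
    exact Real.exp_le_exp.mpr (by nlinarith [sq_nonneg t])
  have hbase0 : 0 ≤ 1 - Real.exp (-t^2/2) := by linarith
  have hbase1 : 1 - Real.exp (-t^2/2) ≤ 1 := by linarith [Real.exp_pos (-t^2/2)]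
  have hρ0 : 0 ≤ ρ := mul_nonneg (by positivity) (pow_nonneg hbase0 _)
  have hρ1 : ρ ≤ 1 := by
    have h1 : (Real.sqrt (2*π))⁻¹ ≤ 1/2 := by
      rw [inv_le_comm₀ (by positivity) (by norm_num), show ((1:ℝ)/2)⁻¹ = 2 by norm_num]
      exact sqrt2pi
    have h2 : Real.exp (-(r*t+1)^2/2) ≤ 1 := by
      rw [show (1:ℝ) = Real.exp 0 by rw [Real.exp_zero]]
      exact Real.exp_le_exp.mpr (by nlinarith [sq_nonneg (r*t+1)])
    have h3 : (1 - Real.exp (-t^2/2))^(P-1) ≤ 1 := pow_le_one₀ hbase0 hbase1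
    have h4 : (Real.sqrt (2*π))⁻¹ * Real.exp (-(r*t+1)^2/2) ≤ 1 := by
      have h5 := mul_le_mul h1 h2 (Real.exp_pos _).le (by norm_num)
      linarith only [h5]
    have h6 := mul_le_mul h4 h3 (pow_nonneg hbase0 _) zero_le_one
    calc ρ ≤ 1*1 := h6
      _ = 1 := by norm_num
  -- the good sets
  set G : Fin P → Set (EuclideanSpace ℝ (Fin d)) := fun p => {v | r ≤ |v (Fin.castLE hPd p)|
      / ⨆ q : {q : Fin P // q ≠ p}, |v (Fin.castLE hPd (q : Fin P))|} with hGdef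
  have hGmeas : ∀ p, MeasurableSet (G p) := fun p =>
    measurableSet_le measurable_const (measurable_ratio hPd p)
  have hGlb : ∀ p, ENNReal.ofReal ρ ≤ unifSphere d (G p) := fun p =>
    good_set_lb hP hPd p r t hr0 ht1
  set μ := Measure.pi fun _ : Fin m => unifSphere d with hμdef
  set E : Set (Fin m → EuclideanSpace ℝ (Fin d)) := {V | ∀ p : Fin P, ∃ i : Fin m,
      r ≤ |V i (Fin.castLE hPd p)|
        / (⨆ q : {q : Fin P // q ≠ p}, |V i (Fin.castLE hPd (q : Fin P))|)} with hEdef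
  have hEeq : E = ⋂ p : Fin P, ⋃ i : Fin m,
      (fun V : Fin m → EuclideanSpace ℝ (Fin d) => V i) ⁻¹' (G p) := by
    ext V
    simp only [hEdef, hGdef, Set.mem_setOf_eq, Set.mem_iInter, Set.mem_iUnion, Set.mem_preimage]
  have hEmeas : MeasurableSet E := by
    rw [hEeq]
    exact MeasurableSet.iInter fun p => MeasurableSet.iUnion fun i =>
      (hGmeas p).preimage (measurable_pi_apply i)
  have hcompl : μ Eᶜ ≤ ENNReal.ofReal δ := by
    have hsub : Eᶜ ⊆ ⋃ p : Fin P, Set.pi Set.univ (fun _ : Fin m => (G p)ᶜ) := by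
      intro V hV
      rw [Set.mem_compl_iff, hEdef, Set.mem_setOf_eq] at hV
      push_neg at hV
      obtain ⟨p, hp⟩ := hV
      refine Set.mem_iUnion.mpr ⟨p, ?_⟩
      intro i _
      exact fun h => absurd h (not_le.mpr (hp i))
    calc μ Eᶜ ≤ μ (⋃ p : Fin P, Set.pi Set.univ (fun _ : Fin m => (G p)ᶜ)) :=
          measure_mono hsub
      _ ≤ ∑' p : Fin P, μ (Set.pi Set.univ (fun _ : Fin m => (G p)ᶜ)) := measure_iUnion_le _
      _ ≤ ∑' (_ : Fin P), ENNReal.ofReal ((1-ρ)^m) := by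
          apply ENNReal.tsum_le_tsum
          intro p
          rw [hμdef, Measure.pi_pi]
          have hone : unifSphere d (G p)ᶜ ≤ ENNReal.ofReal (1-ρ) := by
            rw [measure_compl (hGmeas p) (measure_ne_top _ _), measure_univ,
              ENNReal.ofReal_sub 1 hρ0, ENNReal.ofReal_one]
            exact tsub_le_tsub_left (hGlb p) 1
          calc ∏ _i : Fin m, unifSphere d (G p)ᶜ
              = unifSphere d (G p)ᶜ ^ m := by
                rw [Finset.prod_const, Finset.card_univ, Fintype.card_fin]
            _ ≤ (ENNReal.ofReal (1-ρ))^m := pow_le_pow_left' hone m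
            _ = ENNReal.ofReal ((1-ρ)^m) := (ENNReal.ofReal_pow (by linarith) m).symm
      _ = (P : ℝ≥0∞) * ENNReal.ofReal ((1-ρ)^m) := by
          rw [tsum_fintype, Finset.sum_const, Finset.card_univ, Fintype.card_fin, nsmul_eq_mul]
      _ = ENNReal.ofReal ((P:ℝ) * (1-ρ)^m) := by
          rw [ENNReal.ofReal_mul (by positivity), ENNReal.ofReal_natCast]
      _ ≤ ENNReal.ofReal δ := by
          apply ENNReal.ofReal_le_ofReal
          exact key_real δ c hδ0 hδ1 hc P m hP hm
  have h1 : μ Eᶜ = 1 - μ E := by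
    rw [measure_compl hEmeas (measure_ne_top _ _), measure_univ]
  have h2 : μ E = 1 - μ Eᶜ := by
    rw [h1, ENNReal.sub_sub_cancel ENNReal.one_ne_top prob_le_one]
  calc ENNReal.ofReal (1 - δ) = 1 - ENNReal.ofReal δ := by
        rw [ENNReal.ofReal_sub 1 hδ0.le, ENNReal.ofReal_one]
    _ ≤ 1 - μ Eᶜ := tsub_le_tsub_left hcompl 1
    _ = μ E := h2.symm

end
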